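/- Let X be a Priestley space, V ⊆ X clopen, K₁ = ↑V and K₂ = ↑(K₁ \ V). If G₁ ⊇ G₂ ⊇ … ⊇ G_{2p} is a decreasing sequence of closed upsets with V = G₁ \ (G₂ \ (… \ (G_{2p-1} \ G_{2p})…)), then K₁ ⊆ G₁, K₂ ⊆ G₂, and G₁ \ G₂ ⊆ K₁ \ K₂. -/

import Mathlib

/-- The upset generated by a set. -/
def upSet {X : Type*} [Preorder X] (S : Set X) : Set X := {x | ∃ s ∈ S, s ≤ x}

/-- The right-nested iterated difference `a₁ \ (a₂ \ (… \ (aₙ₋₁ \ aₙ)…))` of a list. -/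
def iterDiff {B : Type*} [BooleanAlgebra B] : List B → B
  | [] => ⊥
  | [x] => x
  | x :: y :: xs => x \ iterDiff (y :: xs)

lemma iterDiff_le_head {B : Type*} [BooleanAlgebra B] (x : B) (l : List B) :
    iterDiff (x :: l) ≤ x := by
  cases l with
  | nil => exact le_rfl
  | cons y ys => exact sdiff_le

theorem stmt13 {X : Type*} [PartialOrder X] [TopologicalSpace X]
    [CompactSpace X] [PriestleySpace X] (V : Set X) (hV : IsClopen V)
    (p : ℕ) (hp : 1 ≤ p) (G : Fin (2 * p) → Set X) (hdec : Antitone G)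
    (hG : ∀ i, IsClosed (G i) ∧ IsUpperSet (G i))
    (hVG : V = iterDiff (List.ofFn G))
    (K₁ K₂ : Set X) (hK₁ : K₁ = upSet V) (hK₂ : K₂ = upSet (K₁ \ V)) :
    K₁ ⊆ G ⟨0, by omega⟩ ∧ K₂ ⊆ G ⟨1, by omega⟩ ∧
    G ⟨0, by omega⟩ \ G ⟨1, by omega⟩ ⊆ K₁ \ K₂ := by
  rcases hL : List.ofFn G with _ | ⟨a, _ | ⟨b, l⟩⟩
  · exfalso; have := congrArg List.length hL; simp at this; omega
  · exfalso; have := congrArg List.length hL; simp at this; try omega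
  have hlen := congrArg List.length hL
  simp at hlen
  have ha : a = G ⟨0, by omega⟩ := by
    have h0 := List.getElem_ofFn (f := G) (i := 0) (by simp; omega)
    simp [hL] at h0
    exact h0
  have hb : b = G ⟨1, by omega⟩ := by
    have h1 := List.getElem_ofFn (f := G) (i := 1) (by simp; omega)
    simp [hL] at h1
    exact h1
  rw [hL] at hVG
  -- hVG : V = a \ iterDiff (b :: l)
  have hVG' : V = a \ iterDiff (b :: l) := hVG
  have hD : iterDiff (b :: l) ⊆ b := iterDiff_le_head b l
  have hVsub : V ⊆ G ⟨0, by omega⟩ := by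
    rw [hVG', ha]; exact Set.diff_subset
  have hK₁sub : K₁ ⊆ G ⟨0, by omega⟩ := by
    rintro x hx
    rw [hK₁] at hx
    obtain ⟨s, hs, hsx⟩ := hx
    exact (hG _).2 hsx (hVsub hs)
  -- elements of K₁ \ V lie in G 1
  have hKV : K₁ \ V ⊆ G ⟨1, by omega⟩ := by
    rintro s ⟨hs₁, hs₂⟩
    have hsa : s ∈ a := ha ▸ hK₁sub hs₁
    have : s ∈ iterDiff (b :: l) := by
      by_contra hcon
      exact hs₂ (hVG' ▸ ⟨hsa, hcon⟩)
    exact hb ▸ hD this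
  have hK₂sub : K₂ ⊆ G ⟨1, by omega⟩ := by
    rintro x hx
    rw [hK₂] at hx
    obtain ⟨s, hs, hsx⟩ := hx
    exact (hG _).2 hsx (hKV hs)
  refine ⟨hK₁sub, hK₂sub, ?_⟩
  rintro x ⟨hx0, hx1⟩
  have hxD : x ∉ iterDiff (b :: l) := fun h => hx1 (hb ▸ hD h)
  have hxV : x ∈ V := hVG' ▸ ⟨ha ▸ hx0, hxD⟩
  refine ⟨hK₁ ▸ ⟨x, hxV, le_rfl⟩, ?_⟩
  intro hx
  rw [hK₂] at hx
  obtain ⟨s, hs, hsx⟩ := hx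
  exact hx1 ((hG _).2 hsx (hKV hs))
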